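/- In the homogenized Weyl algebra hA, every element f can be uniquely represented as a finite F-linear combination of monomials X_0^{i_0} X_1^{i_1}...X_n^{i_n} D_1^{j_1}...D_n^{j_n}. -/

import Mathlib

/-- Generators of the homogenized Weyl algebra: `X0`, `X i`, `D i`. -/
inductive HGen (n : ℕ) : Type
  | X0 : HGen n
  | X : Fin n → HGen n
  | D : Fin n → HGen n

/-- Defining relations of the homogenized Weyl algebra `hA`:
all `X`'s commute, all `D`'s commute, `D_v X_v - X_v D_v = X_0^2`,
`X_v D_w = D_w X_v` for `v ≠ w`, and `X_0` is central. -/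
inductive HRel (F : Type) [Field F] (n : ℕ) :
    FreeAlgebra F (HGen n) → FreeAlgebra F (HGen n) → Prop
  | xx (v w : Fin n) : HRel F n
      (FreeAlgebra.ι F (HGen.X v) * FreeAlgebra.ι F (HGen.X w))
      (FreeAlgebra.ι F (HGen.X w) * FreeAlgebra.ι F (HGen.X v))
  | dd (v w : Fin n) : HRel F n
      (FreeAlgebra.ι F (HGen.D v) * FreeAlgebra.ι F (HGen.D w))
      (FreeAlgebra.ι F (HGen.D w) * FreeAlgebra.ι F (HGen.D v))
  | dx (v : Fin n) : HRel F n
      (FreeAlgebra.ι F (HGen.D v) * FreeAlgebra.ι F (HGen.X v))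
      (FreeAlgebra.ι F (HGen.X v) * FreeAlgebra.ι F (HGen.D v) +
        FreeAlgebra.ι F (HGen.X0 : HGen n) * FreeAlgebra.ι F (HGen.X0 : HGen n))
  | xd (v w : Fin n) (h : v ≠ w) : HRel F n
      (FreeAlgebra.ι F (HGen.X v) * FreeAlgebra.ι F (HGen.D w))
      (FreeAlgebra.ι F (HGen.D w) * FreeAlgebra.ι F (HGen.X v))
  | x0x (v : Fin n) : HRel F n
      (FreeAlgebra.ι F (HGen.X0 : HGen n) * FreeAlgebra.ι F (HGen.X v))
      (FreeAlgebra.ι F (HGen.X v) * FreeAlgebra.ι F (HGen.X0 : HGen n))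
  | x0d (v : Fin n) : HRel F n
      (FreeAlgebra.ι F (HGen.X0 : HGen n) * FreeAlgebra.ι F (HGen.D v))
      (FreeAlgebra.ι F (HGen.D v) * FreeAlgebra.ι F (HGen.X0 : HGen n))

/-- The homogenized Weyl algebra `hA = F[X_0,X_1,…,X_n,D_1,…,D_n]`. -/
abbrev HWeyl (F : Type) [Field F] (n : ℕ) := RingQuot (HRel F n)

noncomputable def hX0 (F : Type) [Field F] (n : ℕ) : HWeyl F n :=
  RingQuot.mkAlgHom F (HRel F n) (FreeAlgebra.ι F (HGen.X0 : HGen n))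

noncomputable def hXv (F : Type) [Field F] (n : ℕ) (i : Fin n) : HWeyl F n :=
  RingQuot.mkAlgHom F (HRel F n) (FreeAlgebra.ι F (HGen.X i))

noncomputable def hDv (F : Type) [Field F] (n : ℕ) (i : Fin n) : HWeyl F n :=
  RingQuot.mkAlgHom F (HRel F n) (FreeAlgebra.ι F (HGen.D i))

/-- The monomial `X_0^{i_0} X_1^{i_1} ⋯ X_n^{i_n} D_1^{j_1} ⋯ D_n^{j_n}` in `hA`. -/
noncomputable def hMon (F : Type) [Field F] (n : ℕ) (i0 : ℕ) (i j : Fin n → ℕ) :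
    HWeyl F n :=
  hX0 F n ^ i0 * (List.ofFn fun k => hXv F n k ^ i k).prod *
    (List.ofFn fun k => hDv F n k ^ j k).prod


open MvPolynomial

section Generic
variable {M : Type*} [Monoid M]

theorem hw_list_bump : ∀ {n : ℕ} (f : Fin n → M), (∀ k l, Commute (f k) (f l)) →
    ∀ (i : Fin n → ℕ) (v : Fin n),
    f v * (List.ofFn fun k => f k ^ i k).prod
      = (List.ofFn fun k => f k ^ (if k = v then i k + 1 else i k)).prod := by
  intro n
  induction n with
  | zero => intro f hf i v; exact v.elim0
  | succ m ih =>
    intro f hf i v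
    rw [List.ofFn_succ, List.ofFn_succ, List.prod_cons, List.prod_cons]
    obtain rfl | ⟨w, rfl⟩ := v.eq_zero_or_eq_succ
    · simp only [eq_self_iff_true, if_true, Fin.succ_ne_zero, if_false]
      rw [← mul_assoc, ← pow_succ']
    · have hc : Commute (f w.succ) (f 0 ^ i 0) := (hf _ _).pow_right _
      rw [← mul_assoc, hc.eq, mul_assoc,
        ih (fun k => f k.succ) (fun k l => hf _ _) (fun k => i k.succ) w]
      simp only [Fin.succ_inj, if_neg ((Fin.succ_ne_zero w).symm)]

variable {A : Type*} [Ring A]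

theorem hw_pow_der (g c a : A) (hac : Commute c a)
    (hv : g * a = a * g + c) : ∀ m : ℕ, g * a ^ m = a ^ m * g + m • (c * a ^ (m - 1)) := by
  intro m
  induction m with
  | zero => simp
  | succ s ih =>
    rw [pow_succ', ← mul_assoc, hv, add_mul, mul_assoc, ih, mul_add]
    rw [← mul_assoc, ← pow_succ']
    cases s with
    | zero => simp
    | succ t =>
      rw [mul_smul_comm, ← mul_assoc, ← hac.eq, mul_assoc, ← pow_succ']
      simp only [Nat.add_sub_cancel, succ_nsmul]
      abel

theorem hw_list_der : ∀ {n : ℕ} (f : Fin n → A), (∀ k l, Commute (f k) (f l)) →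
    ∀ (g c : A), (∀ k, Commute c (f k)) → ∀ (v : Fin n),
    (∀ k, k ≠ v → Commute g (f k)) → g * f v = f v * g + c → ∀ (i : Fin n → ℕ),
    g * (List.ofFn fun k => f k ^ i k).prod
      = (List.ofFn fun k => f k ^ i k).prod * g
        + (i v) • (c * (List.ofFn fun k => f k ^ (if k = v then i k - 1 else i k)).prod) := by
  intro n
  induction n with
  | zero => intro _ _ _ _ _ v; exact v.elim0
  | succ m ih =>
    intro f hf g c hfc v hg hv i
    simp only [List.ofFn_succ, List.prod_cons]
    obtain rfl | ⟨w, rfl⟩ := v.eq_zero_or_eq_succ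
    · have hgr : Commute g ((List.ofFn fun k : Fin m => f k.succ ^ i k.succ).prod) := by
        apply Commute.list_prod_right
        intro y hy
        obtain ⟨k, rfl⟩ := List.mem_ofFn.mp hy
        exact (hg k.succ (Fin.succ_ne_zero k)).pow_right _
      rw [← mul_assoc, hw_pow_der g c (f 0) (hfc 0) hv (i 0), add_mul, mul_assoc, hgr.eq,
        ← mul_assoc, smul_mul_assoc, mul_assoc]
      simp only [eq_self_iff_true, if_true, Fin.succ_ne_zero, if_false, mul_assoc]
    · have hc0 : Commute g (f 0 ^ i 0) := (hg 0 (Fin.succ_ne_zero w).symm).pow_right _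
      rw [← mul_assoc, hc0.eq, mul_assoc,
        ih (fun k => f k.succ) (fun k l => hf _ _) g c (fun k => hfc _) w
          (fun k hk => hg k.succ (by simpa [Fin.succ_inj] using hk)) hv (fun k => i k.succ),
        mul_add, ← mul_assoc, mul_smul_comm, ← mul_assoc, ← ((hfc 0).pow_right (i 0)).eq,
        mul_assoc]
      simp only [Fin.succ_inj, if_neg ((Fin.succ_ne_zero w).symm), mul_assoc]
end Generic

theorem hw_pderiv_comm {σ R : Type*} [CommSemiring R] (i j : σ) (p : MvPolynomial σ R) :
    pderiv i (pderiv j p) = pderiv j (pderiv i p) := by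
  classical
  induction p using MvPolynomial.induction_on' with
  | add p q hp hq => simp [hp, hq]
  | monomial s a =>
    by_cases h : i = j
    · subst h; rfl
    · simp only [pderiv_monomial]
      rw [Finsupp.tsub_apply, Finsupp.tsub_apply, Finsupp.single_eq_of_ne h,
        Finsupp.single_eq_of_ne (Ne.symm h)]
      rw [tsub_right_comm, Nat.sub_zero, Nat.sub_zero]
      congr 1
      ring

namespace HWAux
variable {F : Type} [Field F] {n : ℕ}

theorem comm_XX (v w : Fin n) : Commute (hXv F n v) (hXv F n w) := by
  have h := RingQuot.mkAlgHom_rel F (HRel.xx (F := F) v w)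
  simp only [map_mul] at h; exact h

theorem comm_DD (v w : Fin n) : Commute (hDv F n v) (hDv F n w) := by
  have h := RingQuot.mkAlgHom_rel F (HRel.dd (F := F) v w)
  simp only [map_mul] at h; exact h

theorem comm_X0X (v : Fin n) : Commute (hX0 F n) (hXv F n v) := by
  have h := RingQuot.mkAlgHom_rel F (HRel.x0x (F := F) v)
  simp only [map_mul] at h; exact h

theorem comm_X0D (v : Fin n) : Commute (hX0 F n) (hDv F n v) := by
  have h := RingQuot.mkAlgHom_rel F (HRel.x0d (F := F) v)
  simp only [map_mul] at h; exact h

theorem comm_XD {v w : Fin n} (h : v ≠ w) : Commute (hXv F n v) (hDv F n w) := by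
  have h2 := RingQuot.mkAlgHom_rel F (HRel.xd (F := F) v w h)
  simp only [map_mul] at h2; exact h2

theorem rel_DX (v : Fin n) :
    hDv F n v * hXv F n v = hXv F n v * hDv F n v + hX0 F n * hX0 F n := by
  have h := RingQuot.mkAlgHom_rel F (HRel.dx (F := F) v)
  simp only [map_mul, map_add] at h; exact h

theorem hMul_X0 (i0 : ℕ) (i j : Fin n → ℕ) :
    hX0 F n * hMon F n i0 i j = hMon F n (i0 + 1) i j := by
  rw [hMon, hMon, ← mul_assoc, ← mul_assoc, ← pow_succ']

theorem hMul_X (v : Fin n) (i0 : ℕ) (i j : Fin n → ℕ) :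
    hXv F n v * hMon F n i0 i j
      = hMon F n i0 (fun k => if k = v then i k + 1 else i k) j := by
  rw [hMon, hMon]
  have h1 : Commute (hXv F n v) (hX0 F n ^ i0) := ((comm_X0X v).symm).pow_right i0
  rw [← mul_assoc, ← mul_assoc, h1.eq, mul_assoc (hX0 F n ^ i0),
    hw_list_bump (fun k => hXv F n k) (fun k l => comm_XX k l) i v]


theorem hMul_D (v : Fin n) (i0 : ℕ) (i j : Fin n → ℕ) :
    hDv F n v * hMon F n i0 i j
      = hMon F n i0 i (fun k => if k = v then j k + 1 else j k)
        + (i v) • hMon F n (i0 + 2) (fun k => if k = v then i k - 1 else i k) j := by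
  have h1 : Commute (hDv F n v) (hX0 F n ^ i0) := ((comm_X0D v).symm).pow_right i0
  have hder := hw_list_der (fun k => hXv F n k) (fun k l => comm_XX k l) (hDv F n v)
    (hX0 F n * hX0 F n)
    (fun k => ((comm_X0X k).mul_left (comm_X0X k)))
    v (fun k hk => (comm_XD hk).symm) (rel_DX v) i
  have hbump := hw_list_bump (fun k => hDv F n k) (fun k l => comm_DD k l) j v
  rw [hMon, ← mul_assoc, ← mul_assoc, h1.eq, mul_assoc (hX0 F n ^ i0) (hDv F n v), hder,
    mul_add, add_mul]
  congr 1
  · rw [hMon, ← hbump]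
    simp only [mul_assoc]
  · rw [mul_smul_comm, smul_mul_assoc]
    congr 1
    rw [hMon, pow_add, pow_two]
    simp only [mul_assoc]

variable (F n) in
noncomputable def monFun : (ℕ × (Fin n → ℕ) × (Fin n → ℕ)) → HWeyl F n :=
  fun p => hMon F n p.1 p.2.1 p.2.2

variable (F n) in
noncomputable def SpanMon : Submodule F (HWeyl F n) :=
  Submodule.span F (Set.range (monFun F n))

theorem hMon_mem (i0 : ℕ) (i j : Fin n → ℕ) : hMon F n i0 i j ∈ SpanMon F n :=
  Submodule.subset_span ⟨(i0, i, j), rfl⟩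

theorem hMon_zero : hMon F n 0 0 0 = (1 : HWeyl F n) := by
  rw [hMon]
  simp only [Pi.zero_apply, pow_zero, List.ofFn_const, List.prod_replicate, one_pow, one_mul]

theorem one_mem_SpanMon : (1 : HWeyl F n) ∈ SpanMon F n :=
  (hMon_zero (F := F) (n := n)) ▸ hMon_mem 0 0 0

theorem gen_mul_mem (g : HGen n) {s : HWeyl F n} (hs : s ∈ SpanMon F n) :
    RingQuot.mkAlgHom F (HRel F n) (FreeAlgebra.ι F g) * s ∈ SpanMon F n := by
  have h : SpanMon F n ≤ Submodule.comap
      (LinearMap.mulLeft F (RingQuot.mkAlgHom F (HRel F n) (FreeAlgebra.ι F g)))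
      (SpanMon F n) := by
    rw [SpanMon, Submodule.span_le]
    rintro x ⟨p, rfl⟩
    simp only [SetLike.mem_coe, Submodule.mem_comap, LinearMap.mulLeft_apply]
    cases g with
    | X0 =>
      show hX0 F n * hMon F n p.1 p.2.1 p.2.2 ∈ _
      rw [hMul_X0]; exact hMon_mem _ _ _
    | X v =>
      show hXv F n v * hMon F n p.1 p.2.1 p.2.2 ∈ _
      rw [hMul_X]; exact hMon_mem _ _ _
    | D v =>
      show hDv F n v * hMon F n p.1 p.2.1 p.2.2 ∈ _
      rw [hMul_D]
      exact add_mem (hMon_mem _ _ _) (nsmul_mem (hMon_mem _ _ _) _)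
  exact h hs

theorem mk_mul_mem : ∀ (x : FreeAlgebra F (HGen n)) {s : HWeyl F n}, s ∈ SpanMon F n →
    RingQuot.mkAlgHom F (HRel F n) x * s ∈ SpanMon F n := by
  intro x
  induction x using FreeAlgebra.induction with
  | grade0 a =>
    intro s hs
    rw [AlgHom.commutes, ← Algebra.smul_def]
    exact Submodule.smul_mem _ _ hs
  | grade1 g => intro s hs; exact gen_mul_mem g hs
  | mul x y hx hy => intro s hs; rw [map_mul, mul_assoc]; exact hx (hy hs)
  | add x y hx hy => intro s hs; rw [map_add, add_mul]; exact add_mem (hx hs) (hy hs)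

theorem mem_SpanMon (f : HWeyl F n) : f ∈ SpanMon F n := by
  obtain ⟨x, rfl⟩ := RingQuot.mkAlgHom_surjective F (HRel F n) f
  simpa using mk_mul_mem x one_mem_SpanMon

def toSum : HGen n → (Unit ⊕ Fin n ⊕ Fin n)
  | HGen.X0 => Sum.inl ()
  | HGen.X v => Sum.inr (Sum.inl v)
  | HGen.D v => Sum.inr (Sum.inr v)

theorem toSum_inj : Function.Injective (toSum (n := n)) := by
  intro a b h
  cases a <;> cases b <;> simp_all [toSum]

instance : DecidableEq (HGen n) := toSum_inj.decidableEq

variable (F n) in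
noncomputable def mE : HGen n → Module.End F (MvPolynomial (HGen n) F)
  | HGen.X0 => LinearMap.mulLeft F (X HGen.X0)
  | HGen.X v => LinearMap.mulLeft F (X (HGen.X v))
  | HGen.D v => LinearMap.mulLeft F (X (HGen.X0 : HGen n) * X HGen.X0) ∘ₗ
      (pderiv (HGen.X v)).toLinearMap + LinearMap.mulLeft F (X (HGen.D v))

theorem ne_XX0 (v : Fin n) : (HGen.X v : HGen n) ≠ HGen.X0 := by simp
theorem ne_X0X (v : Fin n) : (HGen.X0 : HGen n) ≠ HGen.X v := by simp
theorem ne_DX (v w : Fin n) : (HGen.D v : HGen n) ≠ HGen.X w := by simp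
theorem ne_XX' {v w : Fin n} (h : v ≠ w) : (HGen.X v : HGen n) ≠ HGen.X w := by simp [h]

theorem relhold : ∀ ⦃x y : FreeAlgebra F (HGen n)⦄, HRel F n x y →
    (FreeAlgebra.lift F (mE F n)) x = (FreeAlgebra.lift F (mE F n)) y := by
  rintro x y h
  cases h with
  | xx v w =>
    refine LinearMap.ext fun p => ?_
    simp only [map_mul, FreeAlgebra.lift_ι_apply, Module.End.mul_apply, mE,
      LinearMap.mulLeft_apply]
    ring
  | x0x v =>
    refine LinearMap.ext fun p => ?_
    simp only [map_mul, FreeAlgebra.lift_ι_apply, Module.End.mul_apply, mE,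
      LinearMap.mulLeft_apply]
    ring
  | x0d v =>
    refine LinearMap.ext fun p => ?_
    simp only [map_mul, FreeAlgebra.lift_ι_apply, Module.End.mul_apply, mE,
      LinearMap.mulLeft_apply, LinearMap.add_apply, LinearMap.coe_comp, Function.comp_apply,
      Derivation.coeFn_coe, map_add, pderiv_mul, pderiv_X_of_ne (ne_X0X v), map_mul]
    ring_nf
  | xd v w hvw =>
    refine LinearMap.ext fun p => ?_
    simp only [map_mul, FreeAlgebra.lift_ι_apply, Module.End.mul_apply, mE,
      LinearMap.mulLeft_apply, LinearMap.add_apply, LinearMap.coe_comp, Function.comp_apply,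
      Derivation.coeFn_coe, map_add, pderiv_mul, pderiv_X_of_ne (ne_XX' hvw)]
    ring
  | dx v =>
    refine LinearMap.ext fun p => ?_
    simp only [map_mul, map_add, FreeAlgebra.lift_ι_apply, Module.End.mul_apply, mE,
      LinearMap.mulLeft_apply, LinearMap.add_apply, LinearMap.coe_comp, Function.comp_apply,
      Derivation.coeFn_coe, pderiv_mul, pderiv_X_self]
    ring
  | dd v w =>
    refine LinearMap.ext fun p => ?_
    simp only [map_mul, FreeAlgebra.lift_ι_apply, Module.End.mul_apply, mE,
      LinearMap.mulLeft_apply, LinearMap.add_apply, LinearMap.coe_comp, Function.comp_apply,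
      Derivation.coeFn_coe, map_add, pderiv_mul, pderiv_X_of_ne (ne_X0X v),
      pderiv_X_of_ne (ne_X0X w), pderiv_X_of_ne (ne_DX w v), pderiv_X_of_ne (ne_DX v w)]
    rw [hw_pderiv_comm (HGen.X v) (HGen.X w)]
    ring

variable (F n) in
noncomputable def ψ : HWeyl F n →ₐ[F] Module.End F (MvPolynomial (HGen n) F) :=
  RingQuot.liftAlgHom F ⟨FreeAlgebra.lift F (mE F n), relhold⟩

theorem ψ_gen (g : HGen n) :
    ψ F n (RingQuot.mkAlgHom F (HRel F n) (FreeAlgebra.ι F g)) = mE F n g := by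
  rw [ψ, RingQuot.liftAlgHom_mkAlgHom_apply, FreeAlgebra.lift_ι_apply]

variable (F n) in
noncomputable def θ : HWeyl F n →ₗ[F] MvPolynomial (HGen n) F where
  toFun f := ψ F n f 1
  map_add' a b := by simp [map_add]
  map_smul' a b := by simp [map_smul]

theorem θ_apply (f : HWeyl F n) : θ F n f = ψ F n f 1 := rfl

variable (F n) in
def Pd (q : MvPolynomial (HGen n) F) : Prop := ∀ v : Fin n, pderiv (HGen.X v) q = 0

theorem Pd_one : Pd F n 1 := fun v => pderiv_one

theorem Pd_mul {a b : MvPolynomial (HGen n) F} (ha : Pd F n a) (hb : Pd F n b) :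
    Pd F n (a * b) := fun v => by rw [pderiv_mul, ha v, hb v, zero_mul, mul_zero, add_zero]

theorem Pd_XD (k : Fin n) : Pd F n (X (HGen.D k)) := fun v => pderiv_X_of_ne (ne_DX k v)

theorem Pd_pow {a : MvPolynomial (HGen n) F} (ha : Pd F n a) (m : ℕ) : Pd F n (a ^ m) := by
  induction m with
  | zero => simpa using Pd_one
  | succ s ih => rw [pow_succ]; exact Pd_mul ih ha

theorem mE_D_apply (v : Fin n) (p : MvPolynomial (HGen n) F) :
    mE F n (HGen.D v) p
      = X HGen.X0 * X HGen.X0 * (pderiv (HGen.X v) p) + X (HGen.D v) * p := rfl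

theorem mE_D_pow_apply (k : Fin n) (m : ℕ) (q : MvPolynomial (HGen n) F) (hq : Pd F n q) :
    (mE F n (HGen.D k) ^ m) q = X (HGen.D k) ^ m * q := by
  induction m with
  | zero => simp
  | succ s ih =>
    rw [pow_succ', Module.End.mul_apply, ih, mE_D_apply,
      Pd_mul (Pd_pow (Pd_XD k) s) hq k, mul_zero, zero_add, ← mul_assoc, ← pow_succ']

theorem DP_apply (l : List (Fin n × ℕ)) (q : MvPolynomial (HGen n) F) (hq : Pd F n q) :
    ((l.map fun p => mE F n (HGen.D p.1) ^ p.2).prod) q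
      = (l.map fun p => (X (HGen.D p.1) : MvPolynomial (HGen n) F) ^ p.2).prod * q ∧
      Pd F n ((l.map fun p => (X (HGen.D p.1) : MvPolynomial (HGen n) F) ^ p.2).prod * q) := by
  induction l with
  | nil => simpa using hq
  | cons a l ih =>
    obtain ⟨ih1, ih2⟩ := ih
    simp only [List.map_cons, List.prod_cons]
    constructor
    · rw [Module.End.mul_apply, ih1, mE_D_pow_apply _ _ _ ih2, ← mul_assoc]
    · rw [mul_assoc]
      exact Pd_mul (Pd_pow (Pd_XD a.1) a.2) ih2

theorem mulLeft_list_apply (l : List (MvPolynomial (HGen n) F))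
    (q : MvPolynomial (HGen n) F) :
    ((l.map fun a => LinearMap.mulLeft F a).prod) q = l.prod * q := by
  induction l with
  | nil => simp
  | cons a l ih =>
    simp only [List.map_cons, List.prod_cons, Module.End.mul_apply, ih,
      LinearMap.mulLeft_apply, mul_assoc]

variable (n) in
noncomputable def expo (p : ℕ × (Fin n → ℕ) × (Fin n → ℕ)) : HGen n →₀ ℕ :=
  Finsupp.single HGen.X0 p.1 + (∑ k, Finsupp.single (HGen.X k) (p.2.1 k))
    + ∑ k, Finsupp.single (HGen.D k) (p.2.2 k)

theorem prodmono {ι : Type} (s : Finset ι) (g : ι → (HGen n →₀ ℕ)) :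
    (∏ k ∈ s, (monomial (g k) (1 : F))) = monomial (∑ k ∈ s, g k) 1 := by
  induction s using Finset.cons_induction with
  | empty => simp
  | cons a s ha ih => rw [Finset.prod_cons, Finset.sum_cons, ih, monomial_mul, one_mul]

theorem θ_hMon (i0 : ℕ) (i j : Fin n → ℕ) :
    θ F n (hMon F n i0 i j) = monomial (expo n (i0, i, j)) 1 := by
  rw [θ_apply, hMon, map_mul, map_mul, map_pow, hX0, ψ_gen]
  rw [show ψ F n (List.ofFn fun k => hXv F n k ^ i k).prod
      = (List.ofFn fun k => mE F n (HGen.X k) ^ i k).prod by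
    rw [map_list_prod, List.map_ofFn]
    refine congrArg List.prod (congrArg List.ofFn (_root_.funext fun k => ?_))
    simp [Function.comp, map_pow, hXv, ψ_gen]]
  rw [show ψ F n (List.ofFn fun k => hDv F n k ^ j k).prod
      = (List.ofFn fun k => mE F n (HGen.D k) ^ j k).prod by
    rw [map_list_prod, List.map_ofFn]
    refine congrArg List.prod (congrArg List.ofFn (_root_.funext fun k => ?_))
    simp [Function.comp, map_pow, hDv, ψ_gen]]
  rw [Module.End.mul_apply, Module.End.mul_apply]
  rw [show (List.ofFn fun k => mE F n (HGen.D k) ^ j k)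
      = (List.ofFn fun k : Fin n => (k, j k)).map (fun p => mE F n (HGen.D p.1) ^ p.2) by
    rw [List.map_ofFn]; rfl]
  rw [(DP_apply _ 1 Pd_one).1, mul_one]
  rw [show (List.ofFn fun k => mE F n (HGen.X k) ^ i k)
      = (List.ofFn fun k : Fin n => (X (HGen.X k) : MvPolynomial (HGen n) F) ^ i k).map
          (fun a => LinearMap.mulLeft F a) by
    rw [List.map_ofFn]
    refine congrArg List.ofFn (_root_.funext fun k => ?_)
    simp [Function.comp, mE, LinearMap.pow_mulLeft]]
  rw [mulLeft_list_apply, show mE F n HGen.X0 = LinearMap.mulLeft F (X HGen.X0) from rfl,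
    LinearMap.pow_mulLeft, LinearMap.mulLeft_apply]
  rw [List.map_ofFn, List.prod_ofFn, List.prod_ofFn]
  simp only [Function.comp]
  simp only [expo]
  simp only [X_pow_eq_monomial]
  rw [prodmono, prodmono, ← mul_assoc, monomial_mul, monomial_mul, one_mul, one_mul]

theorem expo_apply_X0 (p : ℕ × (Fin n → ℕ) × (Fin n → ℕ)) : expo n p HGen.X0 = p.1 := by
  simp [expo, Finsupp.single_apply, Finsupp.finset_sum_apply]

theorem expo_apply_X (p : ℕ × (Fin n → ℕ) × (Fin n → ℕ)) (v : Fin n) :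
    expo n p (HGen.X v) = p.2.1 v := by
  simp [expo, Finsupp.single_apply, Finsupp.finset_sum_apply]

theorem expo_apply_D (p : ℕ × (Fin n → ℕ) × (Fin n → ℕ)) (v : Fin n) :
    expo n p (HGen.D v) = p.2.2 v := by
  simp [expo, Finsupp.single_apply, Finsupp.finset_sum_apply]

theorem expo_inj : Function.Injective (expo n) := by
  rintro ⟨p0, p1, p2⟩ ⟨q0, q1, q2⟩ h
  simp only [Prod.mk.injEq]
  refine ⟨?_, _root_.funext fun v => ?_, _root_.funext fun v => ?_⟩
  · have := DFunLike.congr_fun h HGen.X0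
    rwa [expo_apply_X0, expo_apply_X0] at this
  · have := DFunLike.congr_fun h (HGen.X v)
    rwa [expo_apply_X, expo_apply_X] at this
  · have := DFunLike.congr_fun h (HGen.D v)
    rwa [expo_apply_D, expo_apply_D] at this

theorem coeff_sum_expo (c : (ℕ × (Fin n → ℕ) × (Fin n → ℕ)) →₀ F)
    (q : ℕ × (Fin n → ℕ) × (Fin n → ℕ)) :
    MvPolynomial.coeff (expo n q) (c.sum fun p a => monomial (expo n p) a) = c q := by
  rw [Finsupp.sum, coeff_sum]
  simp only [coeff_monomial]
  have hc : ∀ p ∈ c.support,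
      (if expo n p = expo n q then c p else 0) = if p = q then c p else 0 := by
    intro p _
    by_cases h : p = q
    · subst h; simp
    · rw [if_neg h, if_neg fun hh => h (expo_inj hh)]
  rw [Finset.sum_congr rfl hc, Finset.sum_ite_eq' c.support q fun p => c p]
  by_cases hq : q ∈ c.support
  · rw [if_pos hq]
  · rw [if_neg hq]
    exact (Finsupp.notMem_support_iff.mp hq).symm

theorem θ_sum (c : (ℕ × (Fin n → ℕ) × (Fin n → ℕ)) →₀ F) :
    θ F n (c.sum fun p a => a • hMon F n p.1 p.2.1 p.2.2)
      = c.sum fun p a => monomial (expo n p) a := by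
  rw [map_finsuppSum]
  refine Finsupp.sum_congr fun p _ => ?_
  rw [map_smul, θ_hMon, smul_monomial, smul_eq_mul, mul_one]

end HWAux

/-- Every element of the homogenized Weyl algebra is uniquely a
finite `F`-linear combination of the monomials `X_0^{i_0} X^i D^j`. -/
theorem hweyl_unique_monomial_representation (F : Type) [Field F] [CharZero F] (n : ℕ)
    (f : HWeyl F n) :
    ∃! c : (ℕ × (Fin n → ℕ) × (Fin n → ℕ)) →₀ F,
      f = c.sum fun p a => a • hMon F n p.1 p.2.1 p.2.2 := by
  classical
  obtain ⟨c, hc⟩ := Finsupp.mem_span_range_iff_exists_finsupp.mp (HWAux.mem_SpanMon f)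
  have hc' : (c.sum fun p a => a • hMon F n p.1 p.2.1 p.2.2) = f := hc
  refine ⟨c, hc'.symm, ?_⟩
  intro y hy
  have hsum : (y.sum fun p a => a • hMon F n p.1 p.2.1 p.2.2)
      = c.sum fun p a => a • hMon F n p.1 p.2.1 p.2.2 := hy.symm.trans hc'.symm
  have hθ := congrArg (HWAux.θ F n) hsum
  rw [HWAux.θ_sum, HWAux.θ_sum] at hθ
  ext q
  have := congrArg (MvPolynomial.coeff (HWAux.expo n q)) hθ
  rwa [HWAux.coeff_sum_expo, HWAux.coeff_sum_expo] at this
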